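/- For integers a ≥ 2 and k ≥ 1, the map ξ ↦ (ξ_i^a(1+ξ_{i+1}^a)/(1+ξ_i^a))_{i=1}^k (cyclic indices) is a bijection from the hyperbolic polytope ℍ^k = {ξ ∈ ℝ^k : ξ_i > 0 and ξ_iξ_{i+1} < 1 for all i (cyclically)} onto (0,1)^k. -/

import Mathlib

open Real Set Finset
open Fin.NatCast




lemma my_uniq (k : ℕ) [NeZero k] (η u v : Fin k → ℝ)
    (hη : ∀ i, 0 < η i ∧ η i < 1) (hu : ∀ i, 0 < u i) (hv : ∀ i, 0 < v i)
    (hequ : ∀ i, u i * (1 - η i + u (i + 1)) = η i)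
    (heqv : ∀ i, v i * (1 - η i + v (i + 1)) = η i) : u = v := by
  set w : Fin k → ℝ := fun i => |u i - v i| with hw
  set R : Fin k → ℝ := fun i => u i * v i / η i with hR
  have hRpos : ∀ i, 0 < R i := fun i => by
    have := (hη i).1; have := hu i; have := hv i; positivity
  have key : ∀ i, w i = R i * w (i + 1) := by
    intro i
    have h1 : u i - v i = (u i * v i / η i) * (v (i + 1) - u (i + 1)) := by
      have hηi := (hη i).1
      field_simp
      linear_combination v i * hequ i - u i * heqv i
    have : w i = |u i * v i / η i| * |v (i + 1) - u (i + 1)| := by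
      rw [hw]; simp only [h1, abs_mul]
    rw [this, abs_of_pos (hRpos i), hR]
    congr 1
    rw [abs_sub_comm]
  -- each η i > u i * u (i+1) and > v i * v (i+1)
  have hηu : ∀ i, u i * u (i + 1) < η i := by
    intro i
    have := hequ i
    nlinarith [hu i, hu (i + 1), (hη i).2]
  have hηv : ∀ i, v i * v (i + 1) < η i := by
    intro i
    have := heqv i
    nlinarith [hv i, hv (i + 1), (hη i).2]
  -- product of R squared < 1
  have hshift : ∀ g : Fin k → ℝ, ∏ i, g (i + 1) = ∏ i, g i := by
    intro g
    exact Fintype.prod_equiv (Equiv.addRight (1 : Fin k)) _ _ (fun i => rfl)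
  have hprodR2 : (∏ i, R i) ^ 2 < 1 := by
    have h1 : ∀ i, R i ^ 2 < (u i * v i) / (u (i + 1) * v (i + 1)) := by
      intro i
      have h2 : u (i + 1) * v (i + 1) * (u i * v i) < η i * η i := by
        nlinarith [hηu i, hηv i, mul_pos (hu i) (hu (i+1)), mul_pos (hv i) (hv (i+1)),
          mul_pos (mul_pos (hu i) (hu (i+1))) (mul_pos (hv i) (hv (i+1)))]
      have p1 := hu i; have p2 := hv i; have p3 := (hη i).1
      have p4 := hu (i+1); have p5 := hv (i+1)
      rw [hR, div_pow, div_lt_div_iff₀ (by positivity) (by positivity)]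
      nlinarith [mul_pos (hu i) (hv i)]
    calc (∏ i, R i) ^ 2 = ∏ i, R i ^ 2 := by rw [← Finset.prod_pow]
      _ < ∏ i, (u i * v i) / (u (i + 1) * v (i + 1)) := by
          apply Finset.prod_lt_prod_of_nonempty
          · intro i _
            exact pow_pos (hRpos i) 2
          · intro i _; exact h1 i
          · exact Finset.univ_nonempty
      _ = (∏ i, (u i * v i)) / (∏ i, (u (i + 1) * v (i + 1))) := by
          rw [Finset.prod_div_distrib]
      _ = 1 := by
          rw [hshift fun i => u i * v i, div_self]
          exact ne_of_gt (Finset.prod_pos fun i _ => mul_pos (hu i) (hv i))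
  have hprodRpos : 0 < ∏ i, R i := Finset.prod_pos fun i _ => hRpos i
  have hprodR : ∏ i, R i < 1 := by nlinarith
  -- product of w is zero
  have hP : ∏ i, w i = (∏ i, R i) * ∏ i, w i := by
    calc ∏ i, w i = ∏ i, (R i * w (i + 1)) := by
          exact Finset.prod_congr rfl fun i _ => key i
      _ = (∏ i, R i) * ∏ i, w (i + 1) := Finset.prod_mul_distrib
      _ = (∏ i, R i) * ∏ i, w i := by rw [hshift w]
  have hPnonneg : 0 ≤ ∏ i, w i := Finset.prod_nonneg fun i _ => abs_nonneg _
  have hP0 : ∏ i, w i = 0 := by nlinarith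
  obtain ⟨j, -, hj⟩ := Finset.prod_eq_zero_iff.mp hP0
  -- propagate
  have hprop : ∀ n : ℕ, w (j + n) = 0 := by
    intro n
    induction n with
    | zero => simpa using hj
    | succ m ih =>
        have hk := key (j + m)
        rw [ih] at hk
        have : w (j + m + 1) = 0 := by
          rcases mul_eq_zero.mp hk.symm with h | h
          · exact absurd h (ne_of_gt (hRpos _))
          · exact h
        have harith : j + (↑(m + 1) : Fin k) = j + ↑m + 1 := by
          push_cast; abel
        rw [harith]
        exact this
  have hall : ∀ i, w i = 0 := by
    intro i
    have : i = j + ↑((i - j).val) := by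
      rw [Fin.cast_val_eq_self]; abel
    rw [this]; exact hprop _
  funext i
  have := hall i
  rw [hw] at this
  have := abs_eq_zero.mp this
  linarith [sub_eq_zero.mp this]




private def Dseq (f : ℕ → ℝ → ℝ) (n : ℕ) : ℕ → ℝ → ℝ
  | 0, t => t
  | m + 1, t => f (n - m) (Dseq f n m t)

lemma my_exist (k : ℕ) [NeZero k] (η : Fin k → ℝ) (hη : ∀ i, 0 < η i ∧ η i < 1) :
    ∃ u : Fin k → ℝ, (∀ i, 0 < u i) ∧ ∀ i, u i * (1 - η i + u (i + 1)) = η i := by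
  obtain ⟨n, rfl⟩ : ∃ n, k = n + 1 :=
    ⟨k - 1, (Nat.succ_pred_eq_of_pos (Nat.pos_of_ne_zero (NeZero.ne k))).symm⟩
  set c : ℕ → ℝ := fun j => η (j : Fin (n + 1)) with hc
  have hc0 : ∀ j, 0 < c j := fun j => (hη _).1
  have hc1 : ∀ j, c j < 1 := fun j => (hη _).2
  set f : ℕ → ℝ → ℝ := fun j t => c j / (1 - c j + t) with hf
  have hden : ∀ j t, 0 ≤ t → 0 < 1 - c j + t := fun j t ht => by
    have := hc1 j; linarith
  have hfpos : ∀ j t, 0 ≤ t → 0 < f j t := fun j t ht =>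
    div_pos (hc0 j) (hden j t ht)
  -- nonnegativity of Dseq
  have Dnonneg : ∀ m t, 0 ≤ t → 0 ≤ Dseq f n m t := by
    intro m
    induction m with
    | zero => intro t ht; exact ht
    | succ p ih =>
        intro t ht
        exact le_of_lt (hfpos _ _ (ih t ht))
  -- continuity
  have hfc : ∀ j, ContinuousOn (f j) (Ici 0) := by
    intro j
    apply ContinuousOn.div continuousOn_const
    · exact (continuousOn_const.add continuousOn_id)
    · intro t ht
      exact ne_of_gt (hden j t ht)
  have Dcont : ∀ m, ContinuousOn (Dseq f n m) (Ici 0) := by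
    intro m
    induction m with
    | zero => exact continuousOn_id
    | succ p ih =>
        exact (hfc (n - p)).comp ih (fun t ht => Dnonneg p t ht)
  -- fixed point via IVT
  set B : ℝ := c 0 / (1 - c 0) with hB
  have hBpos : 0 < B := div_pos (hc0 0) (by have := hc1 0; linarith)
  set g : ℝ → ℝ := fun t => Dseq f n (n + 1) t - t with hg
  have hgB : g B ≤ 0 := by
    have h1 : Dseq f n (n + 1) B = f 0 (Dseq f n n B) := by
      show f (n - n) _ = _
      rw [Nat.sub_self]
    have h2 : f 0 (Dseq f n n B) ≤ B := by
      rw [hB]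
      show c 0 / (1 - c 0 + Dseq f n n B) ≤ c 0 / (1 - c 0)
      have h3 := Dnonneg n B (le_of_lt hBpos)
      have h4 := hc0 0
      have h5 := hc1 0
      gcongr
      · linarith
    rw [hg]; simp only [h1]; linarith
  have hg0 : 0 ≤ g 0 := by
    have : 0 < Dseq f n (n + 1) 0 := hfpos _ _ (Dnonneg n 0 le_rfl)
    rw [hg]; simp; linarith
  have hgc : ContinuousOn g (Icc 0 B) :=
    ((Dcont (n + 1)).mono (Icc_subset_Ici_self)).sub continuousOn_id
  obtain ⟨t, ht, hgt⟩ : ∃ t ∈ Icc (0:ℝ) B, g t = 0 := by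
    have := intermediate_value_Icc' (le_of_lt hBpos) hgc
    have h0 : (0:ℝ) ∈ Icc (g B) (g 0) := ⟨hgB, hg0⟩
    obtain ⟨t, ht, hgt⟩ := this h0
    exact ⟨t, ht, hgt⟩
  have htnonneg : 0 ≤ t := ht.1
  have hfix : Dseq f n (n + 1) t = t := by
    have h := hgt
    change Dseq f n (n + 1) t - t = 0 at h
    linarith
  -- define u
  refine ⟨fun i => Dseq f n (n + 1 - i.val) t, ?_, ?_⟩
  · intro i
    show 0 < Dseq f n (n + 1 - i.val) t
    have h1 : n + 1 - i.val = (n - i.val) + 1 := by omega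
    rw [h1]
    exact hfpos _ _ (Dnonneg _ _ htnonneg)
  · intro i
    have hrec : Dseq f n (n + 1 - i.val) t
        = f i.val (Dseq f n (n + 1 - (i + 1).val) t) := by
      rcases eq_or_lt_of_le (Nat.le_of_lt_succ i.isLt) with heq | hlt
      · -- i.val = n, i = last
        have hlast : i = Fin.last n := Fin.ext heq
        have hval : (i + 1).val = 0 := by
          rw [hlast, Fin.last_add_one, Fin.val_zero]
        have e1 : n + 1 - i.val = 1 := by omega
        have e2 : n + 1 - (i + 1).val = n + 1 := by rw [hval]; omega
        rw [e1, e2, hfix, heq]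
        show f (n - 0) (Dseq f n 0 t) = f n t
        rw [Nat.sub_zero]
        rfl
      · -- i.val < n
        have hval : (i + 1).val = i.val + 1 := by
          rw [Fin.val_add_one_of_lt]
          exact Fin.lt_iff_val_lt_val.mpr (by simp [Fin.last]; omega)
        have h1 : n + 1 - i.val = (n - i.val - 1) + 1 + 1 := by omega
        have h2 : n - (n - i.val - 1 + 1) = i.val := by omega
        rw [hval]
        have h3 : n + 1 - (i.val + 1) = n - i.val - 1 + 1 := by omega
        rw [h1, h3]
        show f (n - (n - i.val - 1 + 1)) _ = _
        rw [h2]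
    have hcast : c i.val = η i := by rw [hc]; simp [Fin.cast_val_eq_self]
    have hnext : 0 ≤ Dseq f n (n + 1 - (i + 1).val) t := Dnonneg _ _ htnonneg
    show Dseq f n (n + 1 - i.val) t * (1 - η i + Dseq f n (n + 1 - (i + 1).val) t) = η i
    rw [hrec]
    show c i.val / (1 - c i.val + Dseq f n (n + 1 - (i + 1).val) t) * _ = η i
    rw [hcast]
    have hd : (0:ℝ) < 1 - η i + Dseq f n (n + 1 - (i + 1).val) t := by
      have h := hden i.val _ hnext
      rw [hcast] at h
      exact h
    exact div_mul_cancel₀ _ (ne_of_gt hd)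

theorem stmt_10 (a k : ℕ) (ha : 2 ≤ a) (hk : 1 ≤ k) [NeZero k] :
    Set.BijOn
      (fun ξ : Fin k → ℝ => fun i => ξ i ^ a * (1 + ξ (i + 1) ^ a) / (1 + ξ i ^ a))
      {ξ : Fin k → ℝ | ∀ i, 0 < ξ i ∧ ξ i * ξ (i + 1) < 1}
      (Set.pi Set.univ fun _ : Fin k => Set.Ioo (0:ℝ) 1) := by
  have ha0 : a ≠ 0 := by omega
  have hmaps : Set.MapsTo
      (fun ξ : Fin k → ℝ => fun i => ξ i ^ a * (1 + ξ (i + 1) ^ a) / (1 + ξ i ^ a))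
      {ξ : Fin k → ℝ | ∀ i, 0 < ξ i ∧ ξ i * ξ (i + 1) < 1}
      (Set.pi Set.univ fun _ : Fin k => Set.Ioo (0:ℝ) 1) := by
    intro ξ hξ
    rw [Set.mem_pi]
    intro i _
    have h1 := (hξ i).1
    have h2 := (hξ (i + 1)).1
    have h3 := (hξ i).2
    have hd : (0:ℝ) < 1 + ξ i ^ a := by positivity
    constructor
    · positivity
    · rw [div_lt_one hd]
      have h4 : (ξ i * ξ (i + 1)) ^ a < 1 :=
        pow_lt_one₀ (by positivity) h3 ha0
      rw [mul_pow] at h4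
      nlinarith
  refine ⟨hmaps, ?_, ?_⟩
  · -- InjOn
    intro ξ hξ ξ' hξ' hFeq
    set u : Fin k → ℝ := fun i => ξ i ^ a with hudef
    set v : Fin k → ℝ := fun i => ξ' i ^ a with hvdef
    set η : Fin k → ℝ := fun i => u i * (1 + u (i + 1)) / (1 + u i) with hηdef
    have hηv : ∀ i, η i = v i * (1 + v (i + 1)) / (1 + v i) := fun i => congrFun hFeq i
    have hupos : ∀ i, 0 < u i := fun i => pow_pos (hξ i).1 a
    have hvpos : ∀ i, 0 < v i := fun i => pow_pos (hξ' i).1 a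
    have hη01 : ∀ i, 0 < η i ∧ η i < 1 := by
      intro i
      have hm := Set.mem_pi.mp (hmaps hξ) i (Set.mem_univ i)
      exact ⟨hm.1, hm.2⟩
    have hequ : ∀ i, u i * (1 - η i + u (i + 1)) = η i := by
      intro i
      have hne : (1:ℝ) + u i ≠ 0 := by nlinarith [hupos i]
      have h1 : η i * (1 + u i) = u i * (1 + u (i + 1)) := div_mul_cancel₀ _ hne
      linear_combination -h1
    have heqv : ∀ i, v i * (1 - η i + v (i + 1)) = η i := by
      intro i
      have hne : (1:ℝ) + v i ≠ 0 := by nlinarith [hvpos i]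
      have h1 : η i * (1 + v i) = v i * (1 + v (i + 1)) := by
        rw [hηv i]
        exact div_mul_cancel₀ _ hne
      linear_combination -h1
    have huv : u = v := my_uniq k η u v hη01 hupos hvpos hequ heqv
    funext i
    exact (pow_left_strictMonoOn₀ ha0).injOn (le_of_lt (hξ i).1) (le_of_lt (hξ' i).1)
      (congrFun huv i)
  · -- SurjOn
    intro η hηmem
    have hη : ∀ i, 0 < η i ∧ η i < 1 := by
      intro i
      have := Set.mem_pi.mp hηmem i (Set.mem_univ i)
      exact ⟨this.1, this.2⟩
    obtain ⟨u, hu, hequ⟩ := my_exist k η hη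
    set ξ : Fin k → ℝ := fun i => u i ^ ((a:ℝ)⁻¹) with hxi
    have hpow : ∀ i, ξ i ^ a = u i := fun i =>
      Real.rpow_inv_natCast_pow (le_of_lt (hu i)) ha0
    have hξpos : ∀ i, 0 < ξ i := fun i => Real.rpow_pos_of_pos (hu i) _
    refine ⟨ξ, ?_, ?_⟩
    · intro i
      refine ⟨hξpos i, ?_⟩
      have h1 : u i * u (i + 1) < 1 := by
        have he := hequ i
        have := (hη i).1
        have := (hη i).2
        nlinarith [hu i, hu (i + 1)]
      by_contra hcon
      push_neg at hcon
      have h2 : (1:ℝ) ≤ (ξ i * ξ (i + 1)) ^ a := one_le_pow₀ hcon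
      rw [mul_pow, hpow i, hpow (i + 1)] at h2
      linarith
    · funext i
      show ξ i ^ a * (1 + ξ (i + 1) ^ a) / (1 + ξ i ^ a) = η i
      rw [hpow i, hpow (i + 1)]
      rw [div_eq_iff (by nlinarith [hu i] : (1:ℝ) + u i ≠ 0)]
      linear_combination hequ i
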